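/- Let m, λ, a, b be real constants. Define the real field f(u,v) = cos²(au), the ghost field g(u,v) = cosh²(bv), and r(u,v) = 2m − 4λ²uv + (1/32)(cosh(4bv) − cos(4au)) − (1/4)(a²u² + b²v²). Then ∂_u∂_v r = −4λ², ∂_u∂_u r = −(∂_u f)², and ∂_v∂_v r = (∂_v g)² at every point (u,v) ∈ ℝ². -/

import Mathlib

/-- For the colliding real field `f(u,v) = cos²(au)` and ghost
field `g(u,v) = cosh²(bv)`, with
`r(u,v) = 2m − 4λ²uv + (1/32)(cosh(4bv) − cos(4au)) − (1/4)(a²u² + b²v²)`,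
the CGHS field equations `∂_u∂_v r = −4λ²`, `∂_u∂_u r = −(∂_u f)²`,
`∂_v∂_v r = (∂_v g)²` hold at every point of `ℝ²`. -/
theorem stmt_5 (m lam a b : ℝ)
    (f : ℝ → ℝ → ℝ) (hf : f = fun u _ => Real.cos (a * u) ^ 2)
    (g : ℝ → ℝ → ℝ) (hg : g = fun _ v => Real.cosh (b * v) ^ 2)
    (r : ℝ → ℝ → ℝ)
    (hr : r = fun u v =>
      2 * m - 4 * lam ^ 2 * u * v
        + (1 / 32) * (Real.cosh (4 * b * v) - Real.cos (4 * a * u))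
        - (1 / 4) * (a ^ 2 * u ^ 2 + b ^ 2 * v ^ 2)) :
    ∀ u v : ℝ,
      deriv (fun x => deriv (fun y => r x y) v) u = -4 * lam ^ 2 ∧
      deriv (fun x => deriv (fun x' => r x' v) x) u
        = -(deriv (fun x => f x v) u) ^ 2 ∧
      deriv (fun y => deriv (fun y' => r u y') y) v
        = (deriv (fun y => g u y) v) ^ 2 := by
  subst hf hg hr
  intro u v
  -- inner derivative in second variable, at arbitrary base point
  have key1 : ∀ x w : ℝ, deriv (fun y =>
      2 * m - 4 * lam ^ 2 * x * y
        + (1 / 32) * (Real.cosh (4 * b * y) - Real.cos (4 * a * x))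
        - (1 / 4) * (a ^ 2 * x ^ 2 + b ^ 2 * y ^ 2)) w
      = -(4 * lam ^ 2) * x + ((b / 8) * Real.sinh (4 * b * w) - (b ^ 2 / 2) * w) := by
    intro x w
    have h1 : HasDerivAt (fun y : ℝ => 4 * b * y) (4 * b) w := by
      simpa using (hasDerivAt_id w).const_mul (4 * b)
    have H := (((hasDerivAt_const w (2 * m)).sub
        ((hasDerivAt_id w).const_mul (4 * lam ^ 2 * x))).add
        (((h1.cosh).sub (hasDerivAt_const w (Real.cos (4 * a * x)))).const_mul (1 / 32))).sub
        (((hasDerivAt_const w (a ^ 2 * x ^ 2)).add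
          ((hasDerivAt_pow 2 w).const_mul (b ^ 2))).const_mul (1 / 4))
    simp only [id_eq, Pi.add_def, Pi.sub_def] at H
    rw [H.deriv]; ring
  have key2 : ∀ y x : ℝ, deriv (fun x' =>
      2 * m - 4 * lam ^ 2 * x' * y
        + (1 / 32) * (Real.cosh (4 * b * y) - Real.cos (4 * a * x'))
        - (1 / 4) * (a ^ 2 * x' ^ 2 + b ^ 2 * y ^ 2)) x
      = -(4 * lam ^ 2 * y) + (a / 8) * Real.sin (4 * a * x) - (a ^ 2 / 2) * x := by
    intro y x
    have h1 : HasDerivAt (fun x' : ℝ => 4 * a * x') (4 * a) x := by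
      simpa using (hasDerivAt_id x).const_mul (4 * a)
    have H := (((hasDerivAt_const x (2 * m)).sub
        ((fun h => h.mul_const y) ((hasDerivAt_id x).const_mul (4 * lam ^ 2)))).add
        (((hasDerivAt_const x (Real.cosh (4 * b * y))).sub h1.cos).const_mul (1 / 32))).sub
        ((((hasDerivAt_pow 2 x).const_mul (a ^ 2)).add
          (hasDerivAt_const x (b ^ 2 * y ^ 2))).const_mul (1 / 4))
    simp only [id_eq, Pi.add_def, Pi.sub_def] at H
    rw [H.deriv]; ring
  refine ⟨?_, ?_, ?_⟩
  · have : (fun x => deriv (fun y =>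
        2 * m - 4 * lam ^ 2 * x * y
          + (1 / 32) * (Real.cosh (4 * b * y) - Real.cos (4 * a * x))
          - (1 / 4) * (a ^ 2 * x ^ 2 + b ^ 2 * y ^ 2)) v)
        = fun x => -(4 * lam ^ 2) * x
            + ((b / 8) * Real.sinh (4 * b * v) - (b ^ 2 / 2) * v) := by
      funext x; rw [key1]
    rw [this]
    have H : HasDerivAt (fun x : ℝ => -(4 * lam ^ 2) * x
        + ((b / 8) * Real.sinh (4 * b * v) - (b ^ 2 / 2) * v)) (-(4 * lam ^ 2)) u := by
      simpa using ((hasDerivAt_id u).const_mul (-(4 * lam ^ 2))).add_const ((b / 8) * Real.sinh (4 * b * v) - (b ^ 2 / 2) * v)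
    rw [H.deriv]; ring
  · have : (fun x => deriv (fun x' =>
        2 * m - 4 * lam ^ 2 * x' * v
          + (1 / 32) * (Real.cosh (4 * b * v) - Real.cos (4 * a * x'))
          - (1 / 4) * (a ^ 2 * x' ^ 2 + b ^ 2 * v ^ 2)) x)
        = fun x => -(4 * lam ^ 2 * v) + (a / 8) * Real.sin (4 * a * x) - (a ^ 2 / 2) * x := by
      funext x; rw [key2]
    rw [this]
    have h1 : HasDerivAt (fun x : ℝ => 4 * a * x) (4 * a) u := by
      simpa using (hasDerivAt_id u).const_mul (4 * a)
    have H := ((hasDerivAt_const u (-(4 * lam ^ 2 * v))).add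
        ((h1.sin).const_mul (a / 8))).sub ((hasDerivAt_id u).const_mul (a ^ 2 / 2))
    simp only [id_eq, Pi.add_def, Pi.sub_def] at H
    rw [H.deriv]
    have ha : HasDerivAt (fun x : ℝ => a * x) a u := by
      simpa using (hasDerivAt_id u).const_mul a
    have Hf := (ha.cos).pow 2
    simp only [id_eq, Pi.pow_def] at Hf
    beta_reduce
    rw [Hf.deriv]
    rw [show (4:ℝ) * a * u = 2 * (2 * (a * u)) by ring, Real.cos_two_mul, Real.cos_two_mul]
    linear_combination (4 * a ^ 2 * Real.cos (a * u) ^ 2) * Real.sin_sq_add_cos_sq (a * u)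
  · have : (fun y => deriv (fun y' =>
        2 * m - 4 * lam ^ 2 * u * y'
          + (1 / 32) * (Real.cosh (4 * b * y') - Real.cos (4 * a * u))
          - (1 / 4) * (a ^ 2 * u ^ 2 + b ^ 2 * y' ^ 2)) y)
        = fun y => -(4 * lam ^ 2) * u
            + ((b / 8) * Real.sinh (4 * b * y) - (b ^ 2 / 2) * y) := by
      funext y; rw [key1]
    rw [this]
    have h1 : HasDerivAt (fun y : ℝ => 4 * b * y) (4 * b) v := by
      simpa using (hasDerivAt_id v).const_mul (4 * b)
    have H := ((hasDerivAt_const v (-(4 * lam ^ 2) * u)).add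
        (((h1.sinh).const_mul (b / 8)).sub ((hasDerivAt_id v).const_mul (b ^ 2 / 2))))
    simp only [id_eq, Pi.add_def, Pi.sub_def] at H
    rw [H.deriv]
    have hb : HasDerivAt (fun y : ℝ => b * y) b v := by
      simpa using (hasDerivAt_id v).const_mul b
    have Hg := (hb.cosh).pow 2
    simp only [id_eq, Pi.pow_def] at Hg
    beta_reduce
    rw [Hg.deriv]
    rw [show (4:ℝ) * b * v = 2 * (2 * (b * v)) by ring, Real.cosh_two_mul, Real.cosh_two_mul]
    rw [Real.sinh_two_mul]
    linear_combination (b ^ 2 / 2) * (Real.cosh (b * v) ^ 2 - Real.sinh (b * v) ^ 2 + 1) *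
      Real.cosh_sq_sub_sinh_sq (b * v)
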